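/- Let φ be a probability distribution on [0,1] and γ ∈ (0,1]. There exists a unique w ∈ [γ,1] such that w ∈ Q_φ(1/2 + γ/(2w)) − Q_φ(1/2 − γ/(2w)), i.e., there exist α ∈ Q_φ(1/2 − γ/(2w)) and β ∈ Q_φ(1/2 + γ/(2w)) with β − α = w. -/

import Mathlib

open MeasureTheory Set

set_option linter.unusedSectionVars false

/-- `q` is a `z`-quantile of the distribution `φ` on `[0,1]`. -/
def isQuantile (φ : Measure ℝ) (z q : ℝ) : Prop :=
  q ∈ Icc (0:ℝ) 1 ∧ (φ (Iio q)).toReal ≤ z ∧ z ≤ (φ (Iic q)).toReal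

namespace Stmt5Aux

noncomputable def F (φ : Measure ℝ) (x : ℝ) : ℝ := (φ (Iic x)).toReal
noncomputable def G (φ : Measure ℝ) (x : ℝ) : ℝ := (φ (Iio x)).toReal

variable {φ : Measure ℝ} [IsProbabilityMeasure φ]

lemma F_mono : Monotone (F φ) := fun _ _ h =>
  ENNReal.toReal_mono (measure_ne_top _ _) (measure_mono (Iic_subset_Iic.2 h))

lemma G_mono : Monotone (G φ) := fun _ _ h =>
  ENNReal.toReal_mono (measure_ne_top _ _) (measure_mono (Iio_subset_Iio h))

lemma G_le_F (x : ℝ) : G φ x ≤ F φ x :=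
  ENNReal.toReal_mono (measure_ne_top _ _) (measure_mono Iio_subset_Iic_self)

lemma F_nonneg (x : ℝ) : 0 ≤ F φ x := ENNReal.toReal_nonneg
lemma G_nonneg (x : ℝ) : 0 ≤ G φ x := ENNReal.toReal_nonneg

lemma F_le_one (x : ℝ) : F φ x ≤ 1 := by
  have h : φ (Iic x) ≤ 1 := prob_le_one
  simpa [F] using ENNReal.toReal_mono (by simp) h

lemma G_le_one (x : ℝ) : G φ x ≤ 1 := (G_le_F x).trans (F_le_one x)

/-- key limit lemma 1 -/
lemma G_le_of_forall_lt {q z : ℝ} (hz : 0 ≤ z) (h : ∀ x, x < q → F φ x ≤ z) :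
    G φ q ≤ z := by
  have hsub : Iio q ⊆ ⋃ n : ℕ, Iic (q - 1/((n:ℝ)+1)) := by
    intro x hx
    obtain ⟨n, hn⟩ := exists_nat_one_div_lt (K := ℝ) (sub_pos.2 hx)
    exact mem_iUnion.2 ⟨n, by simp only [mem_Iic]; linarith⟩
  have hmono : Monotone (fun n : ℕ => Iic (q - 1/((n:ℝ)+1))) := by
    intro n m hnm
    apply Iic_subset_Iic.2
    have : 1/((m:ℝ)+1) ≤ 1/((n:ℝ)+1) := by
      apply one_div_le_one_div_of_le (by positivity)
      exact_mod_cast Nat.succ_le_succ hnm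
    linarith
  have hle : φ (Iio q) ≤ ENNReal.ofReal z := by
    refine (measure_mono hsub).trans ?_
    rw [hmono.measure_iUnion]
    refine iSup_le fun n => ?_
    refine (ENNReal.le_ofReal_iff_toReal_le (measure_ne_top _ _) hz).2 ?_
    have hp : (0:ℝ) < 1/((n:ℝ)+1) := by positivity
    exact h _ (by linarith)
  exact ENNReal.toReal_le_of_le_ofReal hz hle

/-- key limit lemma 2 -/
lemma le_F_of_forall_gt {q z : ℝ} (h : ∀ x, q < x → z ≤ G φ x) : z ≤ F φ q := by
  have heq : Iic q = ⋂ n : ℕ, Iio (q + 1/((n:ℝ)+1)) := by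
    ext x
    simp only [mem_Iic, mem_iInter, mem_Iio]
    constructor
    · intro hx n; have : (0:ℝ) < 1/((n:ℝ)+1) := by positivity
      linarith
    · intro hx
      by_contra hc
      push_neg at hc
      obtain ⟨n, hn⟩ := exists_nat_one_div_lt (sub_pos.2 hc)
      exact absurd (hx n) (by linarith)
  have hanti : Antitone (fun n : ℕ => Iio (q + 1/((n:ℝ)+1))) := by
    intro n m hnm
    apply Iio_subset_Iio
    have : 1/((m:ℝ)+1) ≤ 1/((n:ℝ)+1) := by
      apply one_div_le_one_div_of_le (by positivity)
      exact_mod_cast Nat.succ_le_succ hnm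
    linarith
  have hle : ENNReal.ofReal z ≤ φ (Iic q) := by
    rw [heq, hanti.measure_iInter (fun n => measurableSet_Iio.nullMeasurableSet)
      ⟨0, measure_ne_top _ _⟩]
    refine le_iInf fun n => ?_
    refine (ENNReal.ofReal_le_iff_le_toReal (measure_ne_top _ _)).2 ?_
    have hp : (0:ℝ) < 1/((n:ℝ)+1) := by positivity
    exact h _ (by linarith)
  exact (ENNReal.ofReal_le_iff_le_toReal (measure_ne_top _ _)).1 hle

/-- key limit lemma 3 -/
lemma G_sSup_le {A : Set ℝ} (hA : A.Nonempty) (hbdd : BddAbove A) {z : ℝ} (hz : 0 ≤ z)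
    (h : ∀ x ∈ A, G φ x ≤ z) : G φ (sSup A) ≤ z := by
  obtain ⟨u, hum, hut, humem⟩ := exists_seq_tendsto_sSup hA hbdd
  have hsub : Iio (sSup A) ⊆ ⋃ n, Iio (u n) := by
    intro x hx
    obtain ⟨n, hn⟩ := (hut.eventually (eventually_gt_nhds hx)).exists
    exact mem_iUnion.2 ⟨n, hn⟩
  have hmono : Monotone fun n => Iio (u n) := fun n m hnm => Iio_subset_Iio (hum hnm)
  have hle : φ (Iio (sSup A)) ≤ ENNReal.ofReal z := by
    refine (measure_mono hsub).trans ?_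
    rw [hmono.measure_iUnion]
    exact iSup_le fun n =>
      (ENNReal.le_ofReal_iff_toReal_le (measure_ne_top _ _) hz).2 (h _ (humem n))
  exact ENNReal.toReal_le_of_le_ofReal hz hle

/-- key limit lemma 4 -/
lemma le_F_sInf {B : Set ℝ} (hB : B.Nonempty) (hbdd : BddBelow B) {z : ℝ}
    (h : ∀ x ∈ B, z ≤ F φ x) : z ≤ F φ (sInf B) := by
  obtain ⟨u, hua, hut, humem⟩ := exists_seq_tendsto_sInf hB hbdd
  have heq : Iic (sInf B) = ⋂ n, Iic (u n) := by
    ext x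
    simp only [mem_Iic, mem_iInter]
    constructor
    · intro hx n; exact hx.trans (csInf_le hbdd (humem n))
    · intro hx; exact ge_of_tendsto hut (Filter.Eventually.of_forall hx)
  have hanti : Antitone fun n => Iic (u n) := fun n m hnm => Iic_subset_Iic.2 (hua hnm)
  have hle : ENNReal.ofReal z ≤ φ (Iic (sInf B)) := by
    rw [heq, hanti.measure_iInter (fun n => measurableSet_Iic.nullMeasurableSet)
      ⟨0, measure_ne_top _ _⟩]
    exact le_iInf fun n =>
      (ENNReal.ofReal_le_iff_le_toReal (measure_ne_top _ _)).2 (h _ (humem n))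
  exact (ENNReal.ofReal_le_iff_le_toReal (measure_ne_top _ _)).1 hle


def Bset (φ : Measure ℝ) (z : ℝ) : Set ℝ := {x | x ∈ Icc (0:ℝ) 1 ∧ z ≤ F φ x}
def Aset (φ : Measure ℝ) (z : ℝ) : Set ℝ := {x | x ∈ Icc (0:ℝ) 1 ∧ G φ x ≤ z}

noncomputable def lo (φ : Measure ℝ) (z : ℝ) : ℝ := sInf (Bset φ z)
noncomputable def hi (φ : Measure ℝ) (z : ℝ) : ℝ := sSup (Aset φ z)

lemma bddAbove_Aset (z : ℝ) : BddAbove (Aset φ z) := ⟨1, fun _ hx => hx.1.2⟩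
lemma bddBelow_Bset (z : ℝ) : BddBelow (Bset φ z) := ⟨0, fun _ hx => hx.1.1⟩

lemma quantile_le {z z' q q' : ℝ} (h : z < z') (hq : isQuantile φ z q)
    (hq' : isQuantile φ z' q') : q ≤ q' := by
  by_contra hlt
  push_neg at hlt
  have hFG : F φ q' ≤ G φ q :=
    ENNReal.toReal_mono (measure_ne_top _ _) (measure_mono (Iic_subset_Iio.2 hlt))
  have := hq'.2.2
  have := hq.2.1
  simp only [F, G] at hFG
  linarith

variable (hφ : φ (Icc (0:ℝ) 1) = 1)
include hφ

lemma compl_zero : φ (Icc (0:ℝ) 1)ᶜ = 0 := by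
  rw [measure_compl measurableSet_Icc (measure_ne_top _ _), measure_univ, hφ, tsub_self]

lemma F_of_neg {x : ℝ} (hx : x < 0) : F φ x = 0 := by
  have : φ (Iic x) = 0 := measure_mono_null (fun y hy => by
    simp only [mem_compl_iff, mem_Icc, not_and, not_le]
    intro h0; exact absurd h0 (by simp only [mem_Iic] at hy; linarith)) (compl_zero hφ)
  simp [F, this]

lemma G_of_nonpos {x : ℝ} (hx : x ≤ 0) : G φ x = 0 := by
  have : φ (Iio x) = 0 := measure_mono_null (fun y hy => by
    simp only [mem_compl_iff, mem_Icc, not_and, not_le]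
    intro h0; exact absurd h0 (by simp only [mem_Iio] at hy; linarith)) (compl_zero hφ)
  simp [G, this]

lemma F_of_one_le {x : ℝ} (hx : 1 ≤ x) : F φ x = 1 := by
  have h1 : φ (Iic x) = 1 := le_antisymm prob_le_one
    (hφ ▸ measure_mono (fun y hy => le_trans hy.2 hx))
  simp [F, h1]

lemma G_of_one_lt {x : ℝ} (hx : 1 < x) : G φ x = 1 := by
  have h1 : φ (Iio x) = 1 := le_antisymm prob_le_one
    (hφ ▸ measure_mono (fun y hy => lt_of_le_of_lt hy.2 hx))
  simp [G, h1]

lemma one_mem_Bset {z : ℝ} (hz : z ≤ 1) : (1:ℝ) ∈ Bset φ z :=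
  ⟨⟨zero_le_one, le_rfl⟩, by rw [F_of_one_le hφ le_rfl]; exact hz⟩

lemma zero_mem_Aset {z : ℝ} (hz : 0 ≤ z) : (0:ℝ) ∈ Aset φ z :=
  ⟨⟨le_rfl, zero_le_one⟩, by rw [G_of_nonpos hφ le_rfl]; exact hz⟩

lemma lo_nonneg {z : ℝ} (hz : z ≤ 1) : 0 ≤ lo φ z :=
  le_csInf ⟨1, one_mem_Bset hφ hz⟩ fun _ hx => hx.1.1

lemma lo_le_one {z : ℝ} (hz : z ≤ 1) : lo φ z ≤ 1 :=
  csInf_le (bddBelow_Bset z) (one_mem_Bset hφ hz)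

lemma hi_nonneg {z : ℝ} (hz : 0 ≤ z) : 0 ≤ hi φ z :=
  le_csSup (bddAbove_Aset z) (zero_mem_Aset hφ hz)

lemma hi_le_one {z : ℝ} (hz : 0 ≤ z) : hi φ z ≤ 1 :=
  csSup_le ⟨0, zero_mem_Aset hφ hz⟩ fun _ hx => hx.1.2

lemma G_hi_le {z : ℝ} (hz : z ∈ Icc (0:ℝ) 1) : G φ (hi φ z) ≤ z :=
  G_sSup_le ⟨0, zero_mem_Aset hφ hz.1⟩ (bddAbove_Aset z) hz.1 fun _ hx => hx.2

lemma le_F_hi {z : ℝ} (hz : z ∈ Icc (0:ℝ) 1) : z ≤ F φ (hi φ z) := by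
  refine le_F_of_forall_gt (fun x hx => ?_)
  rcases le_or_gt x 1 with h1 | h1
  · have hx0 : 0 ≤ x := le_trans (hi_nonneg hφ hz.1) (le_of_lt hx)
    have hnot : x ∉ Aset φ z := fun hmem => absurd (le_csSup (bddAbove_Aset z) hmem)
      (not_le.2 hx)
    have : ¬ (G φ x ≤ z) := fun hG => hnot ⟨⟨hx0, h1⟩, hG⟩
    linarith [not_le.1 this]
  · rw [G_of_one_lt hφ h1]; exact hz.2

lemma le_F_lo {z : ℝ} (hz : z ∈ Icc (0:ℝ) 1) : z ≤ F φ (lo φ z) :=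
  le_F_sInf ⟨1, one_mem_Bset hφ hz.2⟩ (bddBelow_Bset z) fun _ hx => hx.2

lemma G_lo_le {z : ℝ} (hz : z ∈ Icc (0:ℝ) 1) : G φ (lo φ z) ≤ z := by
  refine G_le_of_forall_lt hz.1 (fun x hx => ?_)
  rcases lt_or_ge x 0 with h0 | h0
  · rw [F_of_neg hφ h0]; exact hz.1
  · have hx1 : x ≤ 1 := le_trans (le_of_lt hx) (lo_le_one hφ hz.2)
    have hnot : x ∉ Bset φ z := fun hmem => absurd (csInf_le (bddBelow_Bset z) hmem)
      (not_le.2 hx)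
    have : ¬ (z ≤ F φ x) := fun hF => hnot ⟨⟨h0, hx1⟩, hF⟩
    linarith [not_le.1 this]

lemma lo_le_hi {z : ℝ} (hz : z ∈ Icc (0:ℝ) 1) : lo φ z ≤ hi φ z :=
  le_csSup (bddAbove_Aset z) ⟨⟨lo_nonneg hφ hz.2, lo_le_one hφ hz.2⟩, G_lo_le hφ hz⟩

lemma isQuantile_of_between {z q : ℝ} (hz : z ∈ Icc (0:ℝ) 1)
    (h1 : lo φ z ≤ q) (h2 : q ≤ hi φ z) : isQuantile φ z q :=
  ⟨⟨le_trans (lo_nonneg hφ hz.2) h1, le_trans h2 (hi_le_one hφ hz.1)⟩,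
    le_trans (G_mono h2) (G_hi_le hφ hz),
    le_trans (le_F_lo hφ hz) (F_mono h1)⟩

lemma hi_right {z₀ : ℝ} (hz₀ : z₀ ∈ Icc (0:ℝ) 1) {ε : ℝ} (hε : 0 < ε) :
    ∃ δ > 0, ∀ z ∈ Icc (0:ℝ) 1, z < z₀ + δ → hi φ z ≤ hi φ z₀ + ε := by
  rcases le_or_gt 1 (hi φ z₀ + ε) with hc | hc
  · exact ⟨1, one_pos, fun z hz _ => (hi_le_one hφ hz.1).trans hc⟩
  · set x₀ := hi φ z₀ + ε with hx₀def
    have hx₀mem : x₀ ∈ Icc (0:ℝ) 1 :=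
      ⟨le_trans (hi_nonneg hφ hz₀.1) (by linarith), le_of_lt hc⟩
    have hnot : x₀ ∉ Aset φ z₀ := fun hmem => by
      have h : x₀ ≤ hi φ z₀ := le_csSup (bddAbove_Aset z₀) hmem
      linarith
    have hG : z₀ < G φ x₀ := not_le.1 fun hG => hnot ⟨hx₀mem, hG⟩
    refine ⟨G φ x₀ - z₀, by linarith, fun z hz hzlt => ?_⟩
    refine csSup_le ⟨0, zero_mem_Aset hφ hz.1⟩ fun x hx => ?_
    by_contra hxgt
    push_neg at hxgt
    have : G φ x₀ ≤ G φ x := G_mono (le_of_lt hxgt)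
    linarith [hx.2]

lemma lo_left {z₀ : ℝ} (hz₀ : z₀ ∈ Icc (0:ℝ) 1) {ε : ℝ} (hε : 0 < ε) :
    ∃ δ > 0, ∀ z ∈ Icc (0:ℝ) 1, z₀ - δ < z → lo φ z₀ - ε ≤ lo φ z := by
  rcases le_or_gt (lo φ z₀ - ε) 0 with hc | hc
  · exact ⟨1, one_pos, fun z hz _ => hc.trans (lo_nonneg hφ hz.2)⟩
  · set x₀ := lo φ z₀ - ε with hx₀def
    have hx₀mem : x₀ ∈ Icc (0:ℝ) 1 :=
      ⟨le_of_lt hc, le_trans (by linarith) (lo_le_one hφ hz₀.2)⟩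
    have hnot : x₀ ∉ Bset φ z₀ := fun hmem => by
      have h : lo φ z₀ ≤ x₀ := csInf_le (bddBelow_Bset z₀) hmem
      linarith
    have hF : F φ x₀ < z₀ := not_le.1 fun hF => hnot ⟨hx₀mem, hF⟩
    refine ⟨z₀ - F φ x₀, by linarith, fun z hz hzgt => ?_⟩
    refine le_csInf ⟨1, one_mem_Bset hφ hz.2⟩ fun x hx => ?_
    by_contra hxlt
    push_neg at hxlt
    have : F φ x ≤ F φ x₀ := F_mono (le_of_lt hxlt)
    linarith [hx.2]

end Stmt5Aux

open Stmt5Aux in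
theorem stmt5 (φ : Measure ℝ) [IsProbabilityMeasure φ] (hφ : φ (Icc (0:ℝ) 1) = 1)
    (γ : ℝ) (hγ : γ ∈ Ioc (0:ℝ) 1) :
    ∃! w, w ∈ Icc γ 1 ∧ ∃ α β, isQuantile φ (1/2 - γ/(2*w)) α ∧
      isQuantile φ (1/2 + γ/(2*w)) β ∧ β - α = w := by
  obtain ⟨hγ0, hγ1⟩ := hγ
  have hfrac : ∀ w : ℝ, γ ≤ w → 0 < γ/(2*w) ∧ γ/(2*w) ≤ 1/2 := by
    intro w hw
    have hw0 : 0 < w := lt_of_lt_of_le hγ0 hw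
    refine ⟨by positivity, ?_⟩
    rw [div_le_iff₀ (by linarith)]
    linarith
  have hzm_mem : ∀ w : ℝ, γ ≤ w → (1/2 - γ/(2*w)) ∈ Icc (0:ℝ) 1 := by
    intro w hw
    obtain ⟨h1, h2⟩ := hfrac w hw
    exact ⟨by linarith, by linarith⟩
  have hzp_mem : ∀ w : ℝ, γ ≤ w → (1/2 + γ/(2*w)) ∈ Icc (0:ℝ) 1 := by
    intro w hw
    obtain ⟨h1, h2⟩ := hfrac w hw
    exact ⟨by linarith, by linarith⟩
  have hlip : ∀ a b : ℝ, γ ≤ a → a ≤ b →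
      0 ≤ γ/(2*a) - γ/(2*b) ∧ γ/(2*a) - γ/(2*b) ≤ (b-a)/(2*γ) := by
    intro a b ha hab
    have ha0 : 0 < a := lt_of_lt_of_le hγ0 ha
    have hb0 : 0 < b := lt_of_lt_of_le ha0 hab
    constructor
    · have h : γ/(2*b) ≤ γ/(2*a) := by
        rw [div_le_div_iff₀ (by linarith) (by linarith)]
        exact mul_le_mul_of_nonneg_left (by linarith) (le_of_lt hγ0)
      linarith
    · have h1 : γ/(2*a) - γ/(2*b) = γ*(b-a)/(2*a*b) := by
        field_simp
      have h2 : γ*(b-a)/(2*a*b) ≤ (b-a)/(2*γ) := by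
        rw [div_le_div_iff₀ (by positivity) (by positivity)]
        have hgab : γ*γ ≤ a*b := mul_le_mul ha (le_trans ha hab) (le_of_lt hγ0) (le_of_lt ha0)
        nlinarith [sub_nonneg.2 hab]
      linarith
  have hi_one : hi φ 1 = 1 := le_antisymm (hi_le_one hφ zero_le_one)
    (le_csSup (bddAbove_Aset 1) ⟨⟨zero_le_one, le_rfl⟩, G_le_one 1⟩)
  have lo_zero : lo φ 0 = 0 := le_antisymm
    (csInf_le (bddBelow_Bset 0) ⟨⟨le_rfl, zero_le_one⟩, F_nonneg 0⟩) (lo_nonneg hφ zero_le_one)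
  -- the set S and its supremum W
  obtain ⟨S, hSdef⟩ : ∃ S : Set ℝ,
      S = {w | w ∈ Icc γ 1 ∧ w ≤ hi φ (1/2 + γ/(2*w)) - lo φ (1/2 - γ/(2*w))} := ⟨_, rfl⟩
  have hSmem : ∀ w : ℝ, w ∈ S ↔
      (w ∈ Icc γ 1 ∧ w ≤ hi φ (1/2 + γ/(2*w)) - lo φ (1/2 - γ/(2*w))) := by
    intro w
    rw [hSdef]
    exact Iff.rfl
  have hγS : γ ∈ S := by
    have hfr : γ/(2*γ) = 1/2 := by
      rw [div_eq_iff (by positivity)]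
      ring
    rw [hSmem]
    refine ⟨⟨le_rfl, hγ1⟩, ?_⟩
    rw [show (1/2 + γ/(2*γ) : ℝ) = 1 by rw [hfr]; norm_num,
      show (1/2 - γ/(2*γ) : ℝ) = 0 by rw [hfr]; norm_num, hi_one, lo_zero]
    linarith
  have hSb : BddAbove S := ⟨1, fun w hw => ((hSmem w).1 hw).1.2⟩
  have hSne : S.Nonempty := ⟨γ, hγS⟩
  obtain ⟨W, hWdef⟩ : ∃ W : ℝ, W = sSup S := ⟨_, rfl⟩
  have hγW : γ ≤ W := hWdef ▸ le_csSup hSb hγS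
  have hW1 : W ≤ 1 := hWdef ▸ csSup_le hSne fun w hw => ((hSmem w).1 hw).1.2
  have hWub : ∀ w ∈ S, w ≤ W := fun w hw => hWdef ▸ le_csSup hSb hw
  have hWlt : ∀ b : ℝ, b < W → ∃ w ∈ S, b < w := fun b hb =>
    exists_lt_of_lt_csSup hSne (hWdef ▸ hb)
  have hW0 : 0 < W := lt_of_lt_of_le hγ0 hγW
  have hzpW : (1/2 + γ/(2*W)) ∈ Icc (0:ℝ) 1 := hzp_mem W hγW
  have hzmW : (1/2 - γ/(2*W)) ∈ Icc (0:ℝ) 1 := hzm_mem W hγW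
  clear hWdef hSdef
  -- Step 1 : W is at most the maximal quantile gap at level W
  have hD : W ≤ hi φ (1/2 + γ/(2*W)) - lo φ (1/2 - γ/(2*W)) := by
    by_contra hcon
    push_neg at hcon
    obtain ⟨ε, hεdef⟩ : ∃ ε : ℝ,
      ε = (W - (hi φ (1/2 + γ/(2*W)) - lo φ (1/2 - γ/(2*W))))/3 := ⟨_, rfl⟩
    have hε : 0 < ε := by rw [hεdef]; linarith
    obtain ⟨δ₁, hδ₁pos, hδ₁⟩ := hi_right hφ hzpW hε
    obtain ⟨δ₂, hδ₂pos, hδ₂⟩ := lo_left hφ hzmW hε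
    obtain ⟨δ, hδdef⟩ : ∃ δ : ℝ, δ = min (min (2*γ*δ₁) (2*γ*δ₂)) ε := ⟨_, rfl⟩
    have hδ0 : 0 < δ := by
      rw [hδdef]
      exact lt_min (lt_min (by positivity) (by positivity)) hε
    have hδle1 : δ ≤ 2*γ*δ₁ := hδdef ▸ le_trans (min_le_left _ _) (min_le_left _ _)
    have hδle2 : δ ≤ 2*γ*δ₂ := hδdef ▸ le_trans (min_le_left _ _) (min_le_right _ _)
    have hδε : δ ≤ ε := hδdef ▸ min_le_right _ _
    obtain ⟨w, hwS, hww⟩ := hWlt (W - δ) (by linarith)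
    obtain ⟨⟨hγw, hw1⟩, hwle⟩ := (hSmem w).1 hwS
    have hwW : w ≤ W := hWub w hwS
    obtain ⟨hl0, hl1⟩ := hlip w W hγw hwW
    have hγδ₁ : 0 < γ*δ₁ := mul_pos hγ0 hδ₁pos
    have hγδ₂ : 0 < γ*δ₂ := mul_pos hγ0 hδ₂pos
    have hq1 : γ/(2*w) - γ/(2*W) < δ₁ := by
      have h2 : (W-w)/(2*γ) < δ₁ := by
        rw [div_lt_iff₀ (by linarith : (0:ℝ) < 2*γ)]
        calc W - w < δ := by linarith
          _ ≤ 2*γ*δ₁ := hδle1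
          _ = δ₁*(2*γ) := by ring
      linarith
    have hq2 : γ/(2*w) - γ/(2*W) < δ₂ := by
      have h2 : (W-w)/(2*γ) < δ₂ := by
        rw [div_lt_iff₀ (by linarith : (0:ℝ) < 2*γ)]
        calc W - w < δ := by linarith
          _ ≤ 2*γ*δ₂ := hδle2
          _ = δ₂*(2*γ) := by ring
      linarith
    have hhi : hi φ (1/2 + γ/(2*w)) ≤ hi φ (1/2 + γ/(2*W)) + ε :=
      hδ₁ _ (hzp_mem w hγw) (by linarith)
    have hlo : lo φ (1/2 - γ/(2*W)) - ε ≤ lo φ (1/2 - γ/(2*w)) :=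
      hδ₂ _ (hzm_mem w hγw) (by linarith)
    linarith
  -- Step 2 : W is at least the minimal quantile gap at level W
  have hd : lo φ (1/2 + γ/(2*W)) - hi φ (1/2 - γ/(2*W)) ≤ W := by
    rcases eq_or_lt_of_le hW1 with h1 | h1
    · have h2 := lo_le_one hφ hzpW.2
      have h3 := hi_nonneg hφ hzmW.1
      linarith
    · by_contra hcon
      push_neg at hcon
      obtain ⟨ε, hεdef⟩ : ∃ ε : ℝ,
        ε = (lo φ (1/2 + γ/(2*W)) - hi φ (1/2 - γ/(2*W)) - W)/3 := ⟨_, rfl⟩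
      have hε : 0 < ε := by rw [hεdef]; linarith
      obtain ⟨δ₁, hδ₁pos, hδ₁⟩ := hi_right hφ hzmW hε
      obtain ⟨δ₂, hδ₂pos, hδ₂⟩ := lo_left hφ hzpW hε
      obtain ⟨δ, hδdef⟩ : ∃ δ : ℝ,
        δ = min (min (2*γ*δ₁) (2*γ*δ₂)) (min ε (1 - W)) := ⟨_, rfl⟩
      have hδ0 : 0 < δ := by
        rw [hδdef]
        exact lt_min (lt_min (by positivity) (by positivity)) (lt_min hε (by linarith))
      have hδle1 : δ ≤ 2*γ*δ₁ := hδdef ▸ le_trans (min_le_left _ _) (min_le_left _ _)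
      have hδle2 : δ ≤ 2*γ*δ₂ := hδdef ▸ le_trans (min_le_left _ _) (min_le_right _ _)
      have hδ1W : δ ≤ 1 - W := hδdef ▸ le_trans (min_le_right _ _) (min_le_right _ _)
      have hδε : δ ≤ ε := hδdef ▸ le_trans (min_le_right _ _) (min_le_left _ _)
      obtain ⟨w, hwdef⟩ : ∃ w : ℝ, w = W + δ/2 := ⟨_, rfl⟩
      have hwW : W < w := by rw [hwdef]; linarith
      have hw1 : w ≤ 1 := by rw [hwdef]; linarith
      have hγw : γ ≤ w := le_trans hγW (le_of_lt hwW)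
      have hnotS : w ∉ S := fun hmem => absurd (hWub w hmem) (not_le.2 hwW)
      have hDw : hi φ (1/2 + γ/(2*w)) - lo φ (1/2 - γ/(2*w)) < w := by
        by_contra hge
        push_neg at hge
        exact hnotS ((hSmem w).2 ⟨⟨hγw, hw1⟩, hge⟩)
      have hlh_p : lo φ (1/2 + γ/(2*w)) ≤ hi φ (1/2 + γ/(2*w)) := lo_le_hi hφ (hzp_mem w hγw)
      have hlh_m : lo φ (1/2 - γ/(2*w)) ≤ hi φ (1/2 - γ/(2*w)) := lo_le_hi hφ (hzm_mem w hγw)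
      obtain ⟨hl0, hl1⟩ := hlip W w hγW (le_of_lt hwW)
      have hwsub : w - W = δ/2 := by rw [hwdef]; ring
      have hγδ₁ : 0 < γ*δ₁ := mul_pos hγ0 hδ₁pos
      have hγδ₂ : 0 < γ*δ₂ := mul_pos hγ0 hδ₂pos
      have hq1 : γ/(2*W) - γ/(2*w) < δ₁ := by
        have h2 : (w-W)/(2*γ) < δ₁ := by
          rw [div_lt_iff₀ (by linarith : (0:ℝ) < 2*γ)]
          calc w - W = δ/2 := hwsub
            _ ≤ (γ*δ₁) := by linarith
            _ < δ₁*(2*γ) := by linarith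
        linarith
      have hq2 : γ/(2*W) - γ/(2*w) < δ₂ := by
        have h2 : (w-W)/(2*γ) < δ₂ := by
          rw [div_lt_iff₀ (by linarith : (0:ℝ) < 2*γ)]
          calc w - W = δ/2 := hwsub
            _ ≤ (γ*δ₂) := by linarith
            _ < δ₂*(2*γ) := by linarith
        linarith
      have hhi : hi φ (1/2 - γ/(2*w)) ≤ hi φ (1/2 - γ/(2*W)) + ε :=
        hδ₁ _ (hzm_mem w hγw) (by linarith)
      have hlo : lo φ (1/2 + γ/(2*W)) - ε ≤ lo φ (1/2 + γ/(2*w)) :=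
        hδ₂ _ (hzp_mem w hγw) (by linarith)
      linarith
  -- Step 3 : construct the quantile pair
  obtain ⟨α, hαdef⟩ : ∃ α : ℝ,
    α = max (lo φ (1/2 - γ/(2*W))) (lo φ (1/2 + γ/(2*W)) - W) := ⟨_, rfl⟩
  have hαq : isQuantile φ (1/2 - γ/(2*W)) α := by
    refine isQuantile_of_between hφ hzmW (hαdef ▸ le_max_left _ _) ?_
    rw [hαdef]
    exact max_le (lo_le_hi hφ hzmW) (by linarith)
  have hβq : isQuantile φ (1/2 + γ/(2*W)) (α + W) := by
    refine isQuantile_of_between hφ hzpW ?_ ?_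
    · have := le_max_right (lo φ (1/2 - γ/(2*W))) (lo φ (1/2 + γ/(2*W)) - W)
      rw [hαdef]
      linarith
    · have h1 : lo φ (1/2 - γ/(2*W)) ≤ hi φ (1/2 + γ/(2*W)) - W := by linarith
      have h2 : lo φ (1/2 + γ/(2*W)) - W ≤ hi φ (1/2 + γ/(2*W)) - W := by
        linarith [lo_le_hi hφ hzpW]
      have := max_le h1 h2
      rw [hαdef]
      linarith
  have key : ∀ w₁ w₂ : ℝ, γ ≤ w₁ → γ ≤ w₂ → w₁ < w₂ →
      ∀ a₁ b₁ a₂ b₂ : ℝ, isQuantile φ (1/2 - γ/(2*w₁)) a₁ → isQuantile φ (1/2 + γ/(2*w₁)) b₁ →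
        isQuantile φ (1/2 - γ/(2*w₂)) a₂ → isQuantile φ (1/2 + γ/(2*w₂)) b₂ →
        b₁ - a₁ = w₁ → b₂ - a₂ = w₂ → False := by
    intro w₁ w₂ h1 h2 hlt a₁ b₁ a₂ b₂ ha₁ hb₁ ha₂ hb₂ he₁ he₂
    have hw₁0 : 0 < w₁ := lt_of_lt_of_le hγ0 h1
    have hw₂0 : 0 < w₂ := lt_of_lt_of_le hγ0 h2
    have hfr : γ/(2*w₂) < γ/(2*w₁) := by
      rw [div_lt_div_iff₀ (by linarith) (by linarith)]
      exact mul_lt_mul_of_pos_left (by linarith) hγ0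
    have hb : b₂ ≤ b₁ := quantile_le (by linarith) hb₂ hb₁
    have ha : a₁ ≤ a₂ := quantile_le (by linarith) ha₁ ha₂
    linarith
  refine ⟨W, ⟨⟨hγW, hW1⟩, α, α + W, hαq, hβq, by ring⟩, ?_⟩
  rintro y ⟨⟨hγy, hy1⟩, α', β', hα', hβ', hyw⟩
  rcases lt_trichotomy y W with h | h | h
  · exact (key y W hγy hγW h α' β' α (α+W) hα' hβ' hαq hβq hyw (by ring)).elim
  · exact h
  · exact (key W y hγW hγy h α (α+W) α' β' hαq hβq hα' hβ' (by ring) hyw).elim
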